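/- Let N ≥ 2 be an integer, let a = (a₁,…,a_N) ∈ ℂ^N with Re(a_i) > 0 for every i, let x ∈ ℂ with Re(x) > 0, and let s ∈ ℂ with Re(s) > N. Then ∑_{n ∈ (ℤ_{≥0})^N} (x + n·a)^{−s} − ∑_{n ∈ (ℤ_{≥0})^N} (x + a₁ + n·a)^{−s} = ∑_{m ∈ (ℤ_{≥0})^{N−1}} (x + m₁a₂ + ⋯ + m_{N−1}a_N)^{−s}, where all three series converge absolutely; i.e. the Barnes multiple zeta function satisfies the difference equation ζ_N(s, x | a) − ζ_N(s, x + a₁ | a) = ζ_{N−1}(s, x | (a₂,…,a_N)). -/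

import Mathlib

open Complex Set

private lemma norm_exp_bound (s z : ℂ) (hsre : 0 ≤ s.re) (hz : 0 < z.re) :
    ‖Complex.exp (-s * Complex.log z)‖ ≤
      Real.exp (|s.im| * Real.pi) * z.re ^ (-s.re) := by
  have hz0 : z ≠ 0 := fun h => by simp [h] at hz
  have habs : 0 < ‖z‖ := norm_pos_iff.mpr hz0
  rw [Complex.norm_exp]
  have hre : (-s * Complex.log z).re = -s.re * Real.log ‖z‖ + s.im * z.arg := by
    simp [Complex.mul_re, Complex.log_re, Complex.log_im]; ring
  rw [hre, Real.exp_add, mul_comm]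
  have h1 : Real.exp (s.im * z.arg) ≤ Real.exp (|s.im| * Real.pi) := by
    apply Real.exp_le_exp.2
    calc s.im * z.arg ≤ |s.im * z.arg| := le_abs_self _
      _ = |s.im| * |z.arg| := abs_mul _ _
      _ ≤ |s.im| * Real.pi := by
          exact mul_le_mul_of_nonneg_left (Complex.abs_arg_le_pi z) (abs_nonneg _)
  have h2 : Real.exp (-s.re * Real.log ‖z‖) ≤ z.re ^ (-s.re) := by
    rw [mul_comm, ← Real.rpow_def_of_pos habs]
    exact Real.rpow_le_rpow_of_nonpos hz (Complex.re_le_norm z) (by nlinarith [hz.trans_le (Complex.re_le_norm z)])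
  calc Real.exp (s.im * z.arg) * Real.exp (-s.re * Real.log ‖z‖)
      ≤ Real.exp (|s.im| * Real.pi) * (z.re ^ (-s.re)) := by
        apply mul_le_mul h1 h2 (Real.exp_pos _).le (Real.exp_pos _).le


private lemma summable_pi_rpow (n : ℕ) {t : ℝ} (ht : 1 < t) :
    Summable fun m : Fin n → ℕ => ∏ i, ((m i : ℝ) + 1) ^ (-t) := by
  induction n with
  | zero => exact Summable.of_finite
  | succ k ih =>
    have hnat : Summable fun j : ℕ => ((j : ℝ) + 1) ^ (-t) := by
      have := (Real.summable_nat_rpow (p := -t)).2 (by linarith)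
      have h2 := (summable_nat_add_iff (f := fun j : ℕ => (j : ℝ) ^ (-t)) 1).2 this
      simpa using h2
    have hprod : Summable fun p : ℕ × (Fin k → ℕ) =>
        ((p.1 : ℝ) + 1) ^ (-t) * ∏ i, ((p.2 i : ℝ) + 1) ^ (-t) :=
      by
        apply Summable.mul_of_nonneg hnat ih
        · intro j
          exact Real.rpow_nonneg (by positivity) _
        · intro m
          exact Finset.prod_nonneg fun i _ => Real.rpow_nonneg (by positivity) _
    rw [← (Fin.consEquiv fun _ : Fin (k + 1) => ℕ).summable_iff]
    refine hprod.congr fun p => ?_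
    simp only [Function.comp, Fin.consEquiv_apply]
    rw [Fin.prod_univ_succ]
    simp

private lemma barnes_summable (n : ℕ) (hn : 0 < n) (b : Fin n → ℂ)
    (hb : ∀ i, 0 < (b i).re) (x : ℂ) (hx : 0 < x.re) (s : ℂ) (hs : (n : ℝ) < s.re) :
    Summable fun m : Fin n → ℕ =>
      ‖Complex.exp (-s * Complex.log (x + ∑ i, (m i : ℂ) * b i))‖ := by
  have hσ : (0 : ℝ) < s.re := lt_of_le_of_lt (by exact_mod_cast hn.le) hs
  set σ := s.re with hσdef
  -- the minimum constant
  obtain ⟨i₀, -, hi₀⟩ := Finset.exists_min_image Finset.univ (fun i => (b i).re)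
    ⟨⟨0, hn⟩, Finset.mem_univ _⟩
  set c : ℝ := min x.re (b i₀).re with hc
  have hc0 : 0 < c := lt_min hx (hb i₀)
  have ht : 1 < σ / n := (lt_div_iff₀ (by exact_mod_cast hn)).2 (by
    simpa [mul_comm] using hs)
  refine Summable.of_nonneg_of_le
    (f := fun m : Fin n → ℕ =>
      (Real.exp (|s.im| * Real.pi) * c ^ (-σ)) * ∏ i, ((m i : ℝ) + 1) ^ (-(σ / n)))
    (fun m => norm_nonneg _) ?_ ?_
  · intro m
    have hre : (x + ∑ i, (m i : ℂ) * b i).re = x.re + ∑ i, (m i : ℝ) * (b i).re := by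
      simp [Complex.add_re, Complex.re_sum, Complex.mul_re]
    have hS0 : (0 : ℝ) ≤ ∑ i, (m i : ℝ) := Finset.sum_nonneg fun i _ => by positivity
    have hzre : 0 < (x + ∑ i, (m i : ℂ) * b i).re := by
      rw [hre]
      have : 0 ≤ ∑ i, (m i : ℝ) * (b i).re :=
        Finset.sum_nonneg fun i _ => mul_nonneg (by positivity) (hb i).le
      linarith
    have key : c * (1 + ∑ i, (m i : ℝ)) ≤ (x + ∑ i, (m i : ℂ) * b i).re := by
      rw [hre, mul_add, mul_one, Finset.mul_sum]
      refine add_le_add (min_le_left _ _) (Finset.sum_le_sum fun i _ => ?_)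
      rw [mul_comm]
      exact mul_le_mul_of_nonneg_left
        (le_trans (min_le_right _ _) (hi₀ i (Finset.mem_univ i))) (by positivity)
    calc ‖Complex.exp (-s * Complex.log (x + ∑ i, (m i : ℂ) * b i))‖
        ≤ Real.exp (|s.im| * Real.pi) * (x + ∑ i, (m i : ℂ) * b i).re ^ (-σ) :=
          norm_exp_bound s _ hσ.le hzre
      _ ≤ Real.exp (|s.im| * Real.pi) * (c * (1 + ∑ i, (m i : ℝ))) ^ (-σ) := by
          have hcl : (0:ℝ) < c * (1 + ∑ i, (m i : ℝ)) := by positivity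
          have hnegσ : -σ ≤ 0 := by linarith
          exact mul_le_mul_of_nonneg_left
            (Real.rpow_le_rpow_of_nonpos hcl key hnegσ) (Real.exp_pos _).le
      _ = (Real.exp (|s.im| * Real.pi) * c ^ (-σ)) * (1 + ∑ i, (m i : ℝ)) ^ (-σ) := by
          rw [Real.mul_rpow hc0.le (by linarith)]; ring
      _ ≤ (Real.exp (|s.im| * Real.pi) * c ^ (-σ)) * ∏ i, ((m i : ℝ) + 1) ^ (-(σ / n)) := by
          have hpos : (0 : ℝ) < Real.exp (|s.im| * Real.pi) * c ^ (-σ) := by positivity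
          apply mul_le_mul_of_nonneg_left _ hpos.le
          have h1 : ((1 : ℝ) + ∑ i, (m i : ℝ)) ^ (-σ) =
              ∏ _i : Fin n, (1 + ∑ i, (m i : ℝ)) ^ (-(σ / n)) := by
            rw [Finset.prod_const, ← Real.rpow_natCast ((1 + ∑ i, (m i : ℝ)) ^ (-(σ / n))),
              ← Real.rpow_mul (by linarith)]
            congr 1
            field_simp
            simp
          rw [h1]
          apply Finset.prod_le_prod
          · intro i _; exact Real.rpow_nonneg (by linarith) _
          · intro i _
            apply Real.rpow_le_rpow_of_nonpos (by positivity)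
            · have := Finset.single_le_sum (f := fun i => (m i : ℝ))
                (fun i _ => by positivity) (Finset.mem_univ i)
              linarith
            · linarith
  · exact (summable_pi_rpow n ht).mul_left _

private lemma tsum_shift_sub {α : Type*} (g : ℕ × α → ℂ) (hg : Summable g) :
    (∑' p : ℕ × α, g p) - (∑' p : ℕ × α, g (p.1 + 1, p.2)) = ∑' m : α, g (0, m) := by
  set t : Set (ℕ × α) := {p | p.1 = 0} with ht
  let eT : α ≃ t :=
    { toFun := fun m => ⟨(0, m), rfl⟩
      invFun := fun p => p.1.2
      left_inv := fun m => rfl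
      right_inv := fun p => Subtype.ext (Prod.ext p.2.symm rfl) }
  let eS : (ℕ × α) ≃ ↥tᶜ :=
    { toFun := fun p => ⟨(p.1 + 1, p.2), Nat.succ_ne_zero _⟩
      invFun := fun q => (q.1.1 - 1, q.1.2)
      left_inv := fun p => by simp
      right_inv := fun q => Subtype.ext (Prod.ext (Nat.succ_pred_eq_of_ne_zero q.2) rfl) }
  have h1 : (∑' m : α, g (0, m)) = ∑' q : t, g q := eT.tsum_eq fun q : t => g q
  have h2 : (∑' p : ℕ × α, g (p.1 + 1, p.2)) = ∑' q : ↥tᶜ, g q :=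
    eS.tsum_eq fun q : ↥tᶜ => g q
  have h3 := Summable.tsum_add_tsum_compl (f := g) (s := t) (hg.subtype t) (hg.subtype tᶜ)
  rw [h1, h2]
  linear_combination -h3



/-- (Difference equation for the Barnes multiple zeta function.)
Let `N ≥ 2`, let `a = (a₁,…,a_N) ∈ ℂᴺ` with `Re(aᵢ) > 0`, let `x ∈ ℂ` with `Re(x) > 0`,
and let `s ∈ ℂ` with `Re(s) > N`.  Then all three series below converge absolutely and
`ζ_N(s, x | a) − ζ_N(s, x + a₁ | a) = ζ_{N−1}(s, x | (a₂,…,a_N))`. -/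
theorem barnes_zeta_difference_equation (N : ℕ) (hN : 2 ≤ N) (a : Fin N → ℂ)
    (ha : ∀ i, 0 < (a i).re) (x : ℂ) (hx : 0 < x.re) (s : ℂ) (hs : (N : ℝ) < s.re) :
    (Summable fun n : Fin N → ℕ =>
        ‖Complex.exp (-s * Complex.log (x + ∑ i, (n i : ℂ) * a i))‖) ∧
    (Summable fun n : Fin N → ℕ =>
        ‖Complex.exp (-s * Complex.log (x + a ⟨0, by omega⟩ + ∑ i, (n i : ℂ) * a i))‖) ∧
    (Summable fun m : Fin (N - 1) → ℕ =>
        ‖Complex.exp (-s * Complex.log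
          (x + ∑ i : Fin (N - 1), (m i : ℂ) * a (Fin.cast (by omega) i.succ)))‖) ∧
    (∑' n : Fin N → ℕ, Complex.exp (-s * Complex.log (x + ∑ i, (n i : ℂ) * a i))) -
        (∑' n : Fin N → ℕ,
          Complex.exp (-s * Complex.log (x + a ⟨0, by omega⟩ + ∑ i, (n i : ℂ) * a i))) =
      ∑' m : Fin (N - 1) → ℕ,
        Complex.exp (-s * Complex.log
          (x + ∑ i : Fin (N - 1), (m i : ℂ) * a (Fin.cast (by omega) i.succ))) := by
  obtain ⟨n, rfl⟩ : ∃ n, N = n + 1 := ⟨N - 1, by omega⟩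
  have hn : 0 < n := by omega
  have hs1 : ((n + 1 : ℕ) : ℝ) < s.re := hs
  have hsn : (n : ℝ) < s.re := by push_cast at hs1 ⊢; linarith
  have hx2 : 0 < (x + a 0).re := by
    rw [Complex.add_re]; have := ha 0; linarith
  have sum1 := barnes_summable (n + 1) (by omega) a ha x hx s hs1
  have sum2 := barnes_summable (n + 1) (by omega) a ha (x + a 0) hx2 s hs1
  have sum3 := barnes_summable n hn (fun i => a i.succ) (fun i => ha _) x hx s hsn
  refine ⟨sum1, sum2, sum3, ?_⟩
  set F : (Fin (n + 1) → ℕ) → ℂ :=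
    fun m => Complex.exp (-s * Complex.log (x + ∑ i, (m i : ℂ) * a i)) with hFdef
  have hF : Summable F := sum1.of_norm
  let e := Fin.consEquiv (fun _ : Fin (n + 1) => ℕ)
  set g : ℕ × (Fin n → ℕ) → ℂ := fun p => F (e p) with hgdef
  have hg : Summable g := e.summable_iff.2 hF
  have key := tsum_shift_sub g hg
  have e1 : (∑' m : Fin (n + 1) → ℕ, F m) = ∑' p : ℕ × (Fin n → ℕ), g p :=
    (e.tsum_eq F).symm
  have e2 : (∑' m : Fin (n + 1) → ℕ,
        Complex.exp (-s * Complex.log (x + a 0 + ∑ i, (m i : ℂ) * a i)))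
      = ∑' p : ℕ × (Fin n → ℕ), g (p.1 + 1, p.2) := by
    rw [← e.tsum_eq
      (fun m : Fin (n + 1) → ℕ =>
        Complex.exp (-s * Complex.log (x + a 0 + ∑ i, (m i : ℂ) * a i)))]
    refine tsum_congr fun p => ?_
    show Complex.exp (-s * Complex.log (x + a 0 + ∑ i, ((e p) i : ℂ) * a i))
        = F (Fin.cons (p.1 + 1) p.2)
    have he : e p = Fin.cons p.1 p.2 := rfl
    rw [he, hFdef]
    simp only [Fin.sum_univ_succ, Fin.cons_zero, Fin.cons_succ]
    congr 1
    congr 1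
    push_cast
    ring
  have e3 : (∑' m : Fin n → ℕ,
        Complex.exp (-s * Complex.log (x + ∑ i : Fin n, (m i : ℂ) * a i.succ)))
      = ∑' m : Fin n → ℕ, g (0, m) := by
    refine tsum_congr fun m => ?_
    show _ = F (Fin.cons 0 m)
    rw [hFdef]
    simp only [Fin.sum_univ_succ, Fin.cons_zero, Fin.cons_succ]
    norm_num
  show (∑' m : Fin (n + 1) → ℕ, F m) -
      (∑' m : Fin (n + 1) → ℕ,
        Complex.exp (-s * Complex.log (x + a 0 + ∑ i, (m i : ℂ) * a i)))
    = ∑' m : Fin n → ℕ,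
        Complex.exp (-s * Complex.log (x + ∑ i : Fin n, (m i : ℂ) * a i.succ))
  rw [e1, e2, e3]
  exact key
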